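/- Let L/K be a finite Galois extension of degree m whose Galois group is cyclic with generator σ, and let k be a positive integer with k ≤ m. Then the set U = { (α, σ(α), σ²(α), ..., σ^{k−1}(α)) : α ∈ L } is a K-subspace of L^k with dim_K U = m whose L-linear span is all of L^k, and U is (k−1)-scattered: dim_K(U ∩ W) ≤ k − 1 for every L-subspace W of L^k with dim_L W = k − 1. That is, U is a (k−1)-scattered [m,k]_{L/K} system. -/

import Mathlib

open Module Finset

section Aux

variable {K L : Type*} [Field K] [Field L] [Algebra K L]

private lemma tele_sum (σ : L ≃ₐ[K] L) (e : ℕ → L) (x : L) (k : ℕ) :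
    ∑ j ∈ range k, (∑ i ∈ range (j + 1), e i) * ((σ ^ (j + 1)) x - (σ ^ j) x)
      = (∑ i ∈ range (k + 1), e i) * (σ ^ k) x - ∑ i ∈ range (k + 1), e i * (σ ^ i) x := by
  induction k with
  | zero => simp
  | succ k ih =>
      rw [sum_range_succ, ih, sum_range_succ (fun i => e i * (σ ^ i) x) (k + 1),
        sum_range_succ e (k + 1)]
      ring

private lemma key_ker_bound [FiniteDimensional K L] (σ : L ≃ₐ[K] L)
    (hfix : finrank K (LinearMap.ker ((σ.toLinearMap : L →ₗ[K] L) - LinearMap.id)) ≤ 1) :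
    ∀ (k : ℕ) (c : ℕ → L), (∃ i < k, c i ≠ 0) →
      finrank K (LinearMap.ker (∑ i ∈ range k, c i • (σ ^ i).toLinearMap : L →ₗ[K] L)) + 1 ≤ k := by
  intro k
  induction k with
  | zero => rintro c ⟨i, hi, _⟩; omega
  | succ k ih =>
      rintro c ⟨i₀, hi₀, hc₀⟩
      set T : L →ₗ[K] L := ∑ i ∈ range (k + 1), c i • (σ ^ i).toLinearMap with hT
      have hTapp : ∀ x, T x = ∑ i ∈ range (k + 1), c i * (σ ^ i) x := by
        intro x; simp [hT, LinearMap.sum_apply, LinearMap.smul_apply, smul_eq_mul]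
      by_cases hker : LinearMap.ker T = ⊥
      · rw [hker, finrank_bot]; omega
      obtain ⟨β, hβT, hβ⟩ := (Submodule.ne_bot_iff _).mp hker
      set e : ℕ → L := fun i => c i * (σ ^ i) β with he
      have hsum : ∑ i ∈ range (k + 1), e i = 0 := by
        rw [← hTapp]; exact hβT
      set d : ℕ → L := fun j => ∑ i ∈ range (j + 1), e i with hd
      set S : L →ₗ[K] L := ∑ i ∈ range (k + 1), e i • (σ ^ i).toLinearMap with hS
      set h : L →ₗ[K] L := ∑ j ∈ range k, d j • (σ ^ j).toLinearMap with hh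
      have hSapp : ∀ x, S x = ∑ i ∈ range (k + 1), e i * (σ ^ i) x := by
        intro x; simp [hS, LinearMap.sum_apply, LinearMap.smul_apply, smul_eq_mul]
      have happ : ∀ x, h x = ∑ j ∈ range k, d j * (σ ^ j) x := by
        intro x; simp [hh, LinearMap.sum_apply, LinearMap.smul_apply, smul_eq_mul]
      have hfactor : ∀ x, h (σ x - x) = - S x := by
        intro x
        rw [happ, hSapp]
        have step : ∑ j ∈ range k, d j * (σ ^ j) (σ x - x)
            = ∑ j ∈ range k, d j * ((σ ^ (j + 1)) x - (σ ^ j) x) := by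
          refine Finset.sum_congr rfl fun j _ => ?_
          have hpow : (σ ^ j) (σ x) = (σ ^ (j + 1)) x := by
            rw [pow_succ]; rfl
          rw [map_sub, hpow]
        rw [step, tele_sum σ e x k, hsum, zero_mul, zero_sub]
      by_cases hdz : ∃ j < k, d j ≠ 0
      · -- inductive case
        have hih := ih d hdz
        rw [← hh] at hih
        -- relate ker T and ker S
        have hSk : ∀ x, S x = T (β * x) := by
          intro x
          rw [hSapp, hTapp]
          refine Finset.sum_congr rfl fun i _ => ?_
          rw [he]
          simp only [map_mul]
          ring
        set μ : L →ₗ[K] L := LinearMap.mulLeft K β with hμ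
        have hμinj : Function.Injective μ := fun x y hxy =>
          mul_left_cancel₀ hβ (by simpa [hμ] using hxy)
        have hmap : Submodule.map μ (LinearMap.ker S) = LinearMap.ker T := by
          apply le_antisymm
          · rintro y ⟨x, hx, rfl⟩
            have hx0 : S x = 0 := hx
            show T (β * x) = 0
            rw [← hSk]
            exact hx0
          · intro y hy
            refine ⟨β⁻¹ * y, ?_, ?_⟩
            · have hy0 : T y = 0 := hy
              show S (β⁻¹ * y) = 0
              rw [hSk, ← mul_assoc, mul_inv_cancel₀ hβ, one_mul]
              exact hy0
            · show β * (β⁻¹ * y) = y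
              rw [← mul_assoc, mul_inv_cancel₀ hβ, one_mul]
        have hkereq : finrank K (LinearMap.ker S) = finrank K (LinearMap.ker T) := by
          rw [← hmap]
          exact (Submodule.equivMapOfInjective μ hμinj (LinearMap.ker S)).finrank_eq
        -- bound ker S
        set ρ : ↥(LinearMap.ker S) →ₗ[K] L :=
          ((σ.toLinearMap : L →ₗ[K] L) - LinearMap.id) ∘ₗ (LinearMap.ker S).subtype with hρ
        have h1 : finrank K (LinearMap.range ρ) + finrank K (LinearMap.ker ρ)
            = finrank K (LinearMap.ker S) := LinearMap.finrank_range_add_finrank_ker ρ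
        have h2 : LinearMap.range ρ ≤ LinearMap.ker h := by
          rintro _ ⟨⟨x, hx⟩, rfl⟩
          have hx0 : S x = 0 := hx
          simp only [LinearMap.mem_ker, hρ, LinearMap.comp_apply, Submodule.subtype_apply,
            LinearMap.sub_apply, LinearMap.id_apply]
          rw [show σ.toLinearMap x = σ x from rfl, hfactor, hx0, neg_zero]
        have h3 : finrank K (LinearMap.range ρ) ≤ finrank K (LinearMap.ker h) :=
          Submodule.finrank_mono h2
        have h4 : finrank K (LinearMap.ker ρ) ≤ 1 := by
          have hsub : Submodule.map (LinearMap.ker S).subtype (LinearMap.ker ρ)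
              ≤ LinearMap.ker ((σ.toLinearMap : L →ₗ[K] L) - LinearMap.id) := by
            rintro _ ⟨⟨x, hx⟩, hxk, rfl⟩
            simpa [hρ] using hxk
          calc finrank K (LinearMap.ker ρ)
              = finrank K (Submodule.map (LinearMap.ker S).subtype (LinearMap.ker ρ)) :=
                (Submodule.equivMapOfInjective _ (Submodule.injective_subtype _)
                  (LinearMap.ker ρ)).finrank_eq
            _ ≤ finrank K (LinearMap.ker ((σ.toLinearMap : L →ₗ[K] L) - LinearMap.id)) :=
                Submodule.finrank_mono hsub
            _ ≤ 1 := hfix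
        omega
      · -- degenerate case : contradiction
        exfalso
        push_neg at hdz
        have hpart : ∀ j ≤ k + 1, ∑ i ∈ range j, e i = 0 := by
          intro j hj
          match j, hj with
          | 0, _ => simp
          | (j + 1), hj =>
            rcases lt_or_ge j k with hjk | hjk
            · exact hdz j hjk
            · have : j = k := by omega
              subst this; exact hsum
        have hzero : ∀ i < k + 1, e i = 0 := by
          intro i hi
          have h1 := hpart (i + 1) (by omega)
          have h2 := hpart i (by omega)
          rw [sum_range_succ, h2, zero_add] at h1
          exact h1
        have : e i₀ ≠ 0 := by
          rw [he]
          refine mul_ne_zero hc₀ fun hz => hβ ?_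
          have := (σ ^ i₀).injective (hz.trans (map_zero (σ ^ i₀)).symm)
          simpa using this
        exact this (hzero i₀ hi₀)

end Aux

/-- for a cyclic Galois extension `L/K` of degree `m` with Galois
group generated by `σ`, and `k ≤ m`, the set
`U = {(α, σ(α), …, σ^{k−1}(α)) : α ∈ L}` is a `(k−1)`-scattered
`[m,k]_{L/K}` system. -/
theorem scattered_example (K L : Type*) [Field K] [Field L] [Algebra K L]
    [FiniteDimensional K L] [IsGalois K L] (m : ℕ) (hm : Module.finrank K L = m)
    (σ : L ≃ₐ[K] L) (hσ : ∀ g : L ≃ₐ[K] L, g ∈ Subgroup.zpowers σ)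
    (k : ℕ) (hk : 0 < k) (hkm : k ≤ m) :
    ∃ U : Submodule K (Fin k → L),
      (U : Set (Fin k → L)) = {v | ∃ α : L, v = fun i : Fin k => (σ ^ (i : ℕ)) α} ∧
      Module.finrank K U = m ∧
      Submodule.span L (U : Set (Fin k → L)) = ⊤ ∧
      ∀ W : Submodule L (Fin k → L), Module.finrank L W = k - 1 →
        Module.finrank K ↥(U ⊓ W.restrictScalars K) ≤ k - 1 := by
  classical
  -- the defining linear map
  set φ : L →ₗ[K] (Fin k → L) :=
    LinearMap.pi (fun i : Fin k => (σ ^ (i : ℕ)).toLinearMap) with hφ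
  have hφapp : ∀ (α : L) (i : Fin k), φ α i = (σ ^ (i : ℕ)) α := fun α i => rfl
  refine ⟨LinearMap.range φ, ?_, ?_, ?_, ?_⟩
  · -- set description
    ext v
    simp only [SetLike.mem_coe, LinearMap.mem_range, Set.mem_setOf_eq]
    constructor
    · rintro ⟨α, rfl⟩; exact ⟨α, funext fun i => rfl⟩
    · rintro ⟨α, rfl⟩; exact ⟨α, funext fun i => rfl⟩
  · -- finrank
    have hφinj : Function.Injective φ := by
      intro a b hab
      have := congrFun hab ⟨0, hk⟩
      simpa [hφapp, pow_zero] using this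
    rw [LinearMap.finrank_range_of_inj hφinj, hm]
  · -- span = ⊤
    by_contra hne
    obtain ⟨f, hf0, hfmap⟩ := Submodule.exists_dual_map_eq_bot_of_lt_top
      (lt_top_iff_ne_top.mpr hne) inferInstance
    set c : Fin k → L := fun i => f (fun j => if i = j then (1 : L) else 0) with hc
    have hfv : ∀ v : Fin k → L, f v = ∑ i, v i * c i := by
      intro v
      conv_lhs => rw [pi_eq_sum_univ v]
      rw [map_sum]
      refine Finset.sum_congr rfl fun i _ => ?_
      rw [map_smul, smul_eq_mul, hc]
    have hfU : ∀ α : L, ∑ i : Fin k, c i * (σ ^ (i : ℕ)) α = 0 := by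
      intro α
      have hmem : φ α ∈ Submodule.span L ((LinearMap.range φ : Submodule K (Fin k → L)) :
          Set (Fin k → L)) := Submodule.subset_span ⟨α, rfl⟩
      have : f (φ α) = 0 := by
        have : f (φ α) ∈ Submodule.map f (Submodule.span L _) := ⟨φ α, hmem, rfl⟩
        rw [hfmap] at this
        exact (Submodule.mem_bot L).mp this
      rw [hfv] at this
      rw [← this]
      exact Finset.sum_congr rfl fun i _ => by rw [hφapp, mul_comm]
    -- Dedekind independence of characters
    have hcard : Fintype.card (L ≃ₐ[K] L) = m := by
      rw [← Nat.card_eq_fintype_card, IsGalois.card_aut_eq_finrank, hm]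
    have hord : orderOf σ = m := by
      rw [orderOf_eq_card_of_forall_mem_zpowers hσ, Nat.card_eq_fintype_card, hcard]
    have ginj : Function.Injective
        (fun i : Fin k => MonoidHomClass.toMonoidHom (σ ^ (i : ℕ))) := by
      intro i j hij
      have hfun : (σ ^ (i : ℕ)) = (σ ^ (j : ℕ)) := by
        ext x
        exact congrFun (congrArg DFunLike.coe hij) x
      have : (i : ℕ) = (j : ℕ) := by
        refine pow_injOn_Iio_orderOf ?_ ?_ hfun <;>
          simp [Set.mem_Iio, hord] <;> omega
      exact Fin.ext this
    have li : LinearIndependent L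
        (fun i : Fin k => ⇑(MonoidHomClass.toMonoidHom (σ ^ (i : ℕ)) : L →* L)) :=
      (linearIndependent_monoidHom L L).comp _ ginj
    have hczero : ∀ i, c i = 0 := by
      have := Fintype.linearIndependent_iff.mp li c ?_
      · exact this
      · funext α
        simp only [Finset.sum_apply, Pi.smul_apply, smul_eq_mul, Pi.zero_apply]
        simpa using hfU α
    refine hf0 (LinearMap.ext fun v => ?_)
    rw [hfv]
    simp [hczero]
  · -- scatteredness
    intro W hW
    have hfixσ : finrank K (LinearMap.ker ((σ.toLinearMap : L →ₗ[K] L) - LinearMap.id)) ≤ 1 := by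
      have hle : LinearMap.ker ((σ.toLinearMap : L →ₗ[K] L) - LinearMap.id)
          ≤ Submodule.span K {(1 : L)} := by
        intro x hx
        have hσx : σ x = x := by
          have : σ.toLinearMap x - x = 0 := by
            simpa [LinearMap.sub_apply] using hx
          have := sub_eq_zero.mp this
          exact this
        have hstab : σ ∈ MulAction.stabilizer (L ≃ₐ[K] L) x := hσx
        have hall : ∀ g : L ≃ₐ[K] L, g x = x := by
          intro g
          exact Subgroup.zpowers_le.mpr hstab (hσ g)
        have hmem : x ∈ IntermediateField.fixedField (⊤ : Subgroup (L ≃ₐ[K] L)) := by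
          intro g
          exact hall g.1
        have hbot : IntermediateField.fixedField (⊤ : Subgroup (L ≃ₐ[K] L)) =
            (⊥ : IntermediateField K L) := ((IsGalois.tfae (F := K) (E := L)).out 0 1).mp (inferInstance : IsGalois K L)
        rw [hbot, IntermediateField.mem_bot] at hmem
        obtain ⟨a, rfl⟩ := hmem
        rw [Algebra.algebraMap_eq_smul_one]
        exact Submodule.smul_mem _ a (Submodule.mem_span_singleton_self 1)
      calc finrank K (LinearMap.ker ((σ.toLinearMap : L →ₗ[K] L) - LinearMap.id))
          ≤ finrank K (Submodule.span K {(1 : L)}) := Submodule.finrank_mono hle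
        _ = 1 := finrank_span_singleton one_ne_zero
    have hWlt : W < ⊤ := by
      rcases lt_or_eq_of_le (le_top : W ≤ ⊤) with h | h
      · exact h
      · exfalso
        have : finrank L W = k := by
          rw [h, finrank_top, Module.finrank_fin_fun]
        omega
    obtain ⟨f, hf0, hfmap⟩ := Submodule.exists_dual_map_eq_bot_of_lt_top hWlt inferInstance
    set c : Fin k → L := fun i => f (fun j => if i = j then (1 : L) else 0) with hc
    have hfv : ∀ v : Fin k → L, f v = ∑ i, v i * c i := by
      intro v
      conv_lhs => rw [pi_eq_sum_univ v]
      rw [map_sum]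
      refine Finset.sum_congr rfl fun i _ => ?_
      rw [map_smul, smul_eq_mul, hc]
    have hcex : ∃ i, c i ≠ 0 := by
      by_contra hcz
      push_neg at hcz
      refine hf0 (LinearMap.ext fun v => ?_)
      rw [hfv]
      simp [hcz]
    obtain ⟨i₁, hi₁⟩ := hcex
    set cc : ℕ → L := fun n => if h : n < k then c ⟨n, h⟩ else 0 with hcc
    have hccex : ∃ i < k, cc i ≠ 0 :=
      ⟨i₁, i₁.isLt, by simpa [hcc, i₁.isLt, Fin.eta] using hi₁⟩
    set T : L →ₗ[K] L := ∑ i ∈ range k, cc i • (σ ^ i).toLinearMap with hT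
    have hbound := key_ker_bound σ hfixσ k cc hccex
    rw [← hT] at hbound
    have hle : (LinearMap.range φ ⊓ W.restrictScalars K : Submodule K (Fin k → L))
        ≤ Submodule.map (φ : L →ₗ[K] (Fin k → L)) (LinearMap.ker T) := by
      rintro x ⟨hxU, hxW⟩
      obtain ⟨α, rfl⟩ := hxU
      refine ⟨α, ?_, rfl⟩
      have hfx : f (φ α) = 0 := by
        have : f (φ α) ∈ Submodule.map f W := ⟨φ α, hxW, rfl⟩
        rw [hfmap] at this
        exact (Submodule.mem_bot L).mp this
      have hTapp : T α = ∑ i ∈ range k, cc i * (σ ^ i) α := by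
        simp [hT, LinearMap.sum_apply, LinearMap.smul_apply, smul_eq_mul]
      show T α = 0
      rw [hTapp, ← Fin.sum_univ_eq_sum_range (fun n => cc n * (σ ^ n) α) k]
      rw [hfv] at hfx
      rw [← hfx]
      refine Finset.sum_congr rfl fun i _ => ?_
      simp [hφapp, hcc, i.isLt, Fin.eta, mul_comm]
    calc finrank K ↥(LinearMap.range φ ⊓ W.restrictScalars K)
        ≤ finrank K (Submodule.map (φ : L →ₗ[K] (Fin k → L)) (LinearMap.ker T)) :=
          Submodule.finrank_mono hle
      _ ≤ finrank K (LinearMap.ker T) := Submodule.finrank_map_le φ (LinearMap.ker T)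
      _ ≤ k - 1 := by omega
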